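/- The C-antilinear involution on Pol(ℂ)_q[[t]] defined by (Σ f_j t^j)* = Σ f_j* t^j is an algebra involution for the *-product: m(ψ₁,ψ₂)* = m(ψ₂*, ψ₁*) for all ψ₁, ψ₂ ∈ Pol(ℂ)_q[[t]]. -/

import Mathlib

open Finset Polynomial
open scoped TensorProduct

inductive PolRel (q : ℝ) : FreeAlgebra ℂ (Fin 2) → FreeAlgebra ℂ (Fin 2) → Prop
  | rel : PolRel q (FreeAlgebra.ι ℂ 1 * FreeAlgebra.ι ℂ 0)
      ((q ^ 2 : ℂ) • (FreeAlgebra.ι ℂ 0 * FreeAlgebra.ι ℂ 1) + ((1 : ℂ) - (q ^ 2 : ℂ)) • 1)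

abbrev PolC (q : ℝ) : Type := RingQuot (PolRel q)

noncomputable def Pz (q : ℝ) : PolC q := RingQuot.mkAlgHom ℂ (PolRel q) (FreeAlgebra.ι ℂ 0)

noncomputable def Pw (q : ℝ) : PolC q := RingQuot.mkAlgHom ℂ (PolRel q) (FreeAlgebra.ι ℂ 1)

noncomputable instance instACGBoxT (q : ℝ) : AddCommGroup ((PolC q ⊗[ℂ] PolC q) →ₗ[ℂ] (PolC q ⊗[ℂ] PolC q)) :=
  @LinearMap.addCommGroup ℂ ℂ (PolC q ⊗[ℂ] PolC q) (PolC q ⊗[ℂ] PolC q) _ _ _ _ _ _ _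

/-- The operator `□̃ : Pol(ℂ)_q^{⊗2} → Pol(ℂ)_q^{⊗2}`,
`□̃(f₁⊗f₂) = (∂⁽ʳ⁾f₁/∂z* ⊗ 1)·q⁻²(1⊗1 - (1+q⁻²)z*⊗z + q⁻²z*²⊗z²)·(1 ⊗ ∂⁽ˡ⁾f₂/∂z)`,
built from the derivation `d` (whose components are the left partials) and the
algebra map `σ` converting left partials to right partials. -/
noncomputable def BoxT (q : ℝ) (σ : PolC q →ₐ[ℂ] PolC q)
    (d : PolC q →ₗ[ℂ] PolC q × PolC q) :
    (PolC q ⊗[ℂ] PolC q) →ₗ[ℂ] (PolC q ⊗[ℂ] PolC q) :=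
  (((q : ℂ) ^ (-2 : ℤ)) • (LinearMap.id : (PolC q ⊗[ℂ] PolC q) →ₗ[ℂ] (PolC q ⊗[ℂ] PolC q))
      - ((q : ℂ) ^ (-2 : ℤ) * (1 + (q : ℂ) ^ (-2 : ℤ))) •
          TensorProduct.map (LinearMap.mulRight ℂ (Pw q)) (LinearMap.mulLeft ℂ (Pz q))
      + ((q : ℂ) ^ (-4 : ℤ)) •
          TensorProduct.map (LinearMap.mulRight ℂ (Pw q ^ 2))
            (LinearMap.mulLeft ℂ (Pz q ^ 2))) ∘ₗ
    TensorProduct.map (σ.toLinearMap ∘ₗ LinearMap.snd ℂ (PolC q) (PolC q) ∘ₗ d)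
      (LinearMap.fst ℂ (PolC q) (PolC q) ∘ₗ d)

/-- The polynomials `p_k` (with their real coefficients viewed in ℂ). -/
noncomputable def pkC (q : ℝ) (k : ℕ) : Polynomial ℂ :=
  ∑ j ∈ range (k + 1),
    C ((∏ i ∈ range j, (1 - (q : ℂ) ^ (2 * (i : ℤ) - 2 * (k : ℤ)))) /
          (∏ i ∈ range j, (1 - (q : ℂ) ^ (2 * i + 2))) ^ 2 * (q : ℂ) ^ (2 * j)) *
      ∏ i ∈ range j,
        (C (1 - (q : ℂ) ^ (2 * i) * (1 + (q : ℂ) ^ 2) + (q : ℂ) ^ (4 * i + 2)) -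
          C ((q : ℂ) ^ (2 * i) * (1 - (q : ℂ) ^ 2) ^ 2) * X)

/-- The `t`-coefficients of the star product `f₁*f₂ = f₁f₂ + Σ_{k≥1} C_k(f₁,f₂)tᵏ`,
with `C_k = m₀ ∘ (p_k(□̃) - p_{k-1}(□̃))`. -/
noncomputable def starCoeff (q : ℝ) (σ : PolC q →ₐ[ℂ] PolC q)
    (d : PolC q →ₗ[ℂ] PolC q × PolC q) (f g : PolC q) : ℕ → PolC q :=
  fun l =>
    if l = 0 then f * g
    else
      LinearMap.mul' ℂ (PolC q)
        ((Polynomial.aeval (BoxT q σ d) (pkC q l - pkC q (l - 1))) (f ⊗ₜ[ℂ] g))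

/-- The multiplication `m` on `Pol(ℂ)_q[[t]]` (formal series represented by their
coefficient sequences): `m(Σ a_j t^j, Σ b_k t^k) = Σ_i (Σ_{j+k=i} a_j * b_k) t^i`. -/
noncomputable def mSer (q : ℝ) (σ : PolC q →ₐ[ℂ] PolC q)
    (d : PolC q →ₗ[ℂ] PolC q × PolC q) (f g : ℕ → PolC q) : ℕ → PolC q :=
  fun n =>
    ∑ j ∈ range (n + 1), ∑ k ∈ range (n + 1 - j),
      starCoeff q σ d (f j) (g k) (n - j - k)

lemma polc_induction (q : ℝ) {P : PolC q → Prop}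
    (halg : ∀ c : ℂ, P (algebraMap ℂ (PolC q) c))
    (hz : P (Pz q)) (hw : P (Pw q))
    (hmul : ∀ x y, P x → P y → P (x * y))
    (hadd : ∀ x y, P x → P y → P (x + y)) : ∀ x, P x := by
  intro x
  obtain ⟨y, rfl⟩ := RingQuot.mkAlgHom_surjective ℂ (PolRel q) x
  induction y using FreeAlgebra.induction with
  | grade0 c => rw [AlgHom.commutes]; exact halg c
  | grade1 i =>
      fin_cases i
      · exact hz
      · exact hw
  | mul a b ha hb => rw [map_mul]; exact hmul _ _ ha hb
  | add a b ha hb => rw [map_add]; exact hadd _ _ ha hb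

section Aux

variable (q : ℝ) (φ σ : PolC q →ₐ[ℂ] PolC q)
  (d : PolC q →ₗ[ℂ] PolC q × PolC q)
  (st : PolC q → PolC q)

lemma st_zero (hst_smul : ∀ (c : ℂ) (x : PolC q), st (c • x) = (starRingEnd ℂ) c • st x) :
    st 0 = 0 := by
  have h := hst_smul 0 0
  simpa using h

lemma st_one (hst_mul : ∀ x y : PolC q, st (x * y) = st y * st x)
    (hst_inv : ∀ x : PolC q, st (st x) = x) : st 1 = 1 := by
  have h2 : ∀ x : PolC q, st x = st 1 * st x := by
    intro x
    conv_lhs => rw [show x = x * 1 from (mul_one x).symm]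
    rw [hst_mul]
  have h3 := h2 (st 1)
  rw [hst_inv] at h3
  simpa [mul_one] using h3.symm

lemma st_algebraMap (hst_smul : ∀ (c : ℂ) (x : PolC q), st (c • x) = (starRingEnd ℂ) c • st x)
    (hst_mul : ∀ x y : PolC q, st (x * y) = st y * st x)
    (hst_inv : ∀ x : PolC q, st (st x) = x) (c : ℂ) :
    st (algebraMap ℂ (PolC q) c) = algebraMap ℂ (PolC q) ((starRingEnd ℂ) c) := by
  rw [Algebra.algebraMap_eq_smul_one, hst_smul, st_one q st hst_mul hst_inv,
    Algebra.algebraMap_eq_smul_one]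

lemma d_one (hLeib : ∀ f g : PolC q,
      d (f * g) = ((d f).1 * g + φ f * (d g).1, (d f).2 * g + φ f * (d g).2)) :
    d 1 = 0 := by
  have h := hLeib 1 1
  simp only [mul_one, one_mul, map_one] at h
  have h1 : (d (1 : PolC q)).1 = (d (1 : PolC q)).1 + (d (1 : PolC q)).1 := by
    conv_lhs => rw [h]
  have h2 : (d (1 : PolC q)).2 = (d (1 : PolC q)).2 + (d (1 : PolC q)).2 := by
    conv_lhs => rw [h]
  have e1 : (d (1 : PolC q)).1 = 0 := left_eq_add.mp h1
  have e2 : (d (1 : PolC q)).2 = 0 := left_eq_add.mp h2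
  exact Prod.ext e1 e2

lemma st_phi (hφz : φ (Pz q) = ((q : ℂ) ^ (-2 : ℤ)) • Pz q)
    (hφw : φ (Pw q) = ((q : ℂ) ^ (2 : ℤ)) • Pw q)
    (hσz : σ (Pz q) = ((q : ℂ) ^ (2 : ℤ)) • Pz q)
    (hσw : σ (Pw q) = ((q : ℂ) ^ (-2 : ℤ)) • Pw q)
    (hst_add : ∀ x y : PolC q, st (x + y) = st x + st y)
    (hst_smul : ∀ (c : ℂ) (x : PolC q), st (c • x) = (starRingEnd ℂ) c • st x)
    (hst_mul : ∀ x y : PolC q, st (x * y) = st y * st x)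
    (hst_inv : ∀ x : PolC q, st (st x) = x)
    (hst_z : st (Pz q) = Pw q) (hst_w : st (Pw q) = Pz q) :
    ∀ x, st (φ x) = σ (st x) := by
  apply polc_induction q (P := fun x => st (φ x) = σ (st x))
  · intro c
    rw [AlgHom.commutes, st_algebraMap q st hst_smul hst_mul hst_inv, AlgHom.commutes]
  · rw [hφz, hst_smul, hst_z, hσw]
    congr 1
    simp [map_zpow₀, Complex.conj_ofReal]
  · rw [hφw, hst_smul, hst_w, hσz]
    congr 1
    simp [map_zpow₀, Complex.conj_ofReal]
  · intro x y hx hy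
    rw [map_mul, hst_mul, hx, hy, hst_mul, map_mul]
  · intro x y hx hy
    rw [map_add, hst_add, hx, hy, hst_add, map_add]

lemma sigma_phi (hφz : φ (Pz q) = ((q : ℂ) ^ (-2 : ℤ)) • Pz q)
    (hφw : φ (Pw q) = ((q : ℂ) ^ (2 : ℤ)) • Pw q)
    (hσz : σ (Pz q) = ((q : ℂ) ^ (2 : ℤ)) • Pz q)
    (hσw : σ (Pw q) = ((q : ℂ) ^ (-2 : ℤ)) • Pw q)
    (hq0 : 0 < q) :
    ∀ x, σ (φ x) = x := by
  have hq : ((q : ℂ) ^ (2 : ℤ)) * ((q : ℂ) ^ (-2 : ℤ)) = 1 := by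
    rw [← zpow_add₀ (by exact_mod_cast hq0.ne' : (q : ℂ) ≠ 0)]
    norm_num
  refine polc_induction q (P := fun x => σ (φ x) = x) ?_ ?_ ?_ ?_ ?_
  · intro c; rw [AlgHom.commutes, AlgHom.commutes]
  · show σ (φ (Pz q)) = Pz q
    rw [hφz, map_smul, hσz, smul_smul, mul_comm, hq, one_smul]
  · show σ (φ (Pw q)) = Pw q
    rw [hφw, map_smul, hσw, smul_smul, hq, one_smul]
  · intro x y hx hy; rw [map_mul, map_mul, hx, hy]
  · intro x y hx hy; rw [map_add, map_add, hx, hy]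

lemma key_lemma (hq0 : 0 < q)
    (hφz : φ (Pz q) = ((q : ℂ) ^ (-2 : ℤ)) • Pz q)
    (hφw : φ (Pw q) = ((q : ℂ) ^ (2 : ℤ)) • Pw q)
    (hσz : σ (Pz q) = ((q : ℂ) ^ (2 : ℤ)) • Pz q)
    (hσw : σ (Pw q) = ((q : ℂ) ^ (-2 : ℤ)) • Pw q)
    (hdz : d (Pz q) = (1, 0)) (hdw : d (Pw q) = (0, 1))
    (hLeib : ∀ f g : PolC q,
      d (f * g) = ((d f).1 * g + φ f * (d g).1, (d f).2 * g + φ f * (d g).2))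
    (hst_add : ∀ x y : PolC q, st (x + y) = st x + st y)
    (hst_smul : ∀ (c : ℂ) (x : PolC q), st (c • x) = (starRingEnd ℂ) c • st x)
    (hst_mul : ∀ x y : PolC q, st (x * y) = st y * st x)
    (hst_inv : ∀ x : PolC q, st (st x) = x)
    (hst_z : st (Pz q) = Pw q) (hst_w : st (Pw q) = Pz q) :
    ∀ f, σ ((d (st f)).2) = st ((d f).1) := by
  have st0 := st_zero q st hst_smul
  have st1 := st_one q st hst_mul hst_inv
  have d1 := d_one q φ d hLeib
  apply polc_induction q (P := fun f => σ ((d (st f)).2) = st ((d f).1))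
  · intro c
    rw [st_algebraMap q st hst_smul hst_mul hst_inv]
    rw [Algebra.algebraMap_eq_smul_one, Algebra.algebraMap_eq_smul_one, map_smul, map_smul,
      d1]
    simp [st0]
  · rw [hst_z, hdw, hdz]
    simpa using st1.symm
  · rw [hst_w, hdz, hdw]
    simpa using st0.symm
  · intro x y hx hy
    rw [hst_mul, hLeib, hLeib]
    simp only
    rw [map_add, map_mul, map_mul, hst_add, hst_mul, hst_mul]
    rw [hx, hy]
    rw [sigma_phi q φ σ hφz hφw hσz hσw hq0 (st y),
      ← st_phi q φ σ st hφz hφw hσz hσw hst_add hst_smul hst_mul hst_inv hst_z hst_w x]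
    abel
  · intro x y hx hy
    rw [hst_add, map_add, map_add]
    simp only [Prod.fst_add, Prod.snd_add, map_add, hst_add, hx, hy]
noncomputable def Sm (hst_add : ∀ x y : PolC q, st (x + y) = st x + st y)
    (hst_smul : ∀ (c : ℂ) (x : PolC q), st (c • x) = (starRingEnd ℂ) c • st x) :
    (PolC q ⊗[ℂ] PolC q) →+ (PolC q ⊗[ℂ] PolC q) :=
  TensorProduct.liftAddHom
    { toFun := fun m =>
        { toFun := fun n => st n ⊗ₜ[ℂ] st m
          map_zero' := by
            show st 0 ⊗ₜ[ℂ] st m = 0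
            rw [st_zero q st hst_smul, TensorProduct.zero_tmul]
          map_add' := fun n n' => by
            show st (n + n') ⊗ₜ[ℂ] st m = st n ⊗ₜ[ℂ] st m + st n' ⊗ₜ[ℂ] st m
            rw [hst_add, TensorProduct.add_tmul] }
      map_zero' := by
        ext n
        simp [st_zero q st hst_smul]
      map_add' := fun m m' => by
        ext n
        simp [hst_add, TensorProduct.tmul_add] }
    (fun c m n => by
      simp only [AddMonoidHom.coe_mk, ZeroHom.coe_mk, hst_smul]
      simp [TensorProduct.tmul_smul, TensorProduct.smul_tmul])

variable (hst_add : ∀ x y : PolC q, st (x + y) = st x + st y)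
  (hst_smul : ∀ (c : ℂ) (x : PolC q), st (c • x) = (starRingEnd ℂ) c • st x)

lemma Sm_tmul (f g : PolC q) :
    Sm q st hst_add hst_smul (f ⊗ₜ[ℂ] g) = st g ⊗ₜ[ℂ] st f := rfl

lemma Sm_smul (c : ℂ) (x : PolC q ⊗[ℂ] PolC q) :
    Sm q st hst_add hst_smul (c • x) = (starRingEnd ℂ) c • Sm q st hst_add hst_smul x := by
  induction x using TensorProduct.induction_on with
  | zero => simp
  | tmul f g =>
      rw [TensorProduct.smul_tmul', Sm_tmul, Sm_tmul, hst_smul, TensorProduct.tmul_smul]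
  | add x y hx hy => rw [smul_add, map_add, hx, hy, map_add, smul_add]

lemma boxT_tmul (f g : PolC q) :
    BoxT q σ d (f ⊗ₜ[ℂ] g) =
      ((q : ℂ) ^ (-2 : ℤ)) • (σ ((d f).2) ⊗ₜ[ℂ] (d g).1)
        - ((q : ℂ) ^ (-2 : ℤ) * (1 + (q : ℂ) ^ (-2 : ℤ))) •
            ((σ ((d f).2) * Pw q) ⊗ₜ[ℂ] (Pz q * (d g).1))
        + ((q : ℂ) ^ (-4 : ℤ)) •
            ((σ ((d f).2) * Pw q ^ 2) ⊗ₜ[ℂ] (Pz q ^ 2 * (d g).1)) := by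
  simp [BoxT, TensorProduct.map_tmul, LinearMap.mulRight_apply, LinearMap.mulLeft_apply,
    LinearMap.sub_apply, LinearMap.add_apply, LinearMap.smul_apply]
  congr 1

lemma conj_q_zpow (n : ℤ) : (starRingEnd ℂ) ((q : ℂ) ^ n) = (q : ℂ) ^ n := by
  rw [map_zpow₀, Complex.conj_ofReal]

lemma Sm_box (hq0 : 0 < q)
    (hφz : φ (Pz q) = ((q : ℂ) ^ (-2 : ℤ)) • Pz q)
    (hφw : φ (Pw q) = ((q : ℂ) ^ (2 : ℤ)) • Pw q)
    (hσz : σ (Pz q) = ((q : ℂ) ^ (2 : ℤ)) • Pz q)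
    (hσw : σ (Pw q) = ((q : ℂ) ^ (-2 : ℤ)) • Pw q)
    (hdz : d (Pz q) = (1, 0)) (hdw : d (Pw q) = (0, 1))
    (hLeib : ∀ f g : PolC q,
      d (f * g) = ((d f).1 * g + φ f * (d g).1, (d f).2 * g + φ f * (d g).2))
    (hst_mul : ∀ x y : PolC q, st (x * y) = st y * st x)
    (hst_inv : ∀ x : PolC q, st (st x) = x)
    (hst_z : st (Pz q) = Pw q) (hst_w : st (Pw q) = Pz q) :
    ∀ x, Sm q st hst_add hst_smul (BoxT q σ d x) =
      BoxT q σ d (Sm q st hst_add hst_smul x) := by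
  have key := key_lemma q φ σ d st hq0 hφz hφw hσz hσw hdz hdw hLeib hst_add hst_smul
    hst_mul hst_inv hst_z hst_w
  have key' : ∀ f, (d (st f)).1 = st (σ ((d f).2)) := by
    intro f
    have h := key (st f)
    rw [hst_inv] at h
    have := congrArg st h
    rw [hst_inv] at this
    exact this.symm
  intro x
  induction x using TensorProduct.induction_on with
  | zero => simp
  | tmul f g =>
      rw [boxT_tmul, Sm_tmul, boxT_tmul]
      rw [key, key']
      have hz2 : st (Pz q ^ 2) = Pw q ^ 2 := by rw [sq, hst_mul, hst_z, sq]
      have hw2 : st (Pw q ^ 2) = Pz q ^ 2 := by rw [sq, hst_mul, hst_w, sq]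
      rw [map_add, map_sub, Sm_smul, Sm_smul, Sm_smul, Sm_tmul, Sm_tmul, Sm_tmul,
        conj_q_zpow, map_mul, conj_q_zpow, map_add, map_one, conj_q_zpow, conj_q_zpow,
        hst_mul, hst_mul, hst_mul, hst_mul, hst_z, hst_w, hz2, hw2]
  | add x y hx hy => rw [map_add, map_add, hx, hy, map_add, map_add]

lemma Sm_pow (L : (PolC q ⊗[ℂ] PolC q) →ₗ[ℂ] (PolC q ⊗[ℂ] PolC q))
    (hL : ∀ x, Sm q st hst_add hst_smul (L x) = L (Sm q st hst_add hst_smul x)) :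
    ∀ (n : ℕ) (x), Sm q st hst_add hst_smul ((L ^ n) x) = (L ^ n) (Sm q st hst_add hst_smul x) := by
  intro n
  induction n with
  | zero => intro x; simp
  | succ n ih =>
      intro x
      rw [pow_succ, Module.End.mul_apply, Module.End.mul_apply, ih, hL]

lemma Sm_aeval (L : (PolC q ⊗[ℂ] PolC q) →ₗ[ℂ] (PolC q ⊗[ℂ] PolC q))
    (hL : ∀ x, Sm q st hst_add hst_smul (L x) = L (Sm q st hst_add hst_smul x))
    (P : Polynomial ℂ) (hP : P.map (starRingEnd ℂ) = P) (x : PolC q ⊗[ℂ] PolC q) :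
    Sm q st hst_add hst_smul ((Polynomial.aeval L P) x) =
      (Polynomial.aeval L P) (Sm q st hst_add hst_smul x) := by
  have main : ∀ P : Polynomial ℂ, Sm q st hst_add hst_smul ((Polynomial.aeval L P) x) =
      (Polynomial.aeval L (P.map (starRingEnd ℂ))) (Sm q st hst_add hst_smul x) := by
    intro P
    induction P using Polynomial.induction_on' with
    | add p r hp hr =>
        rw [map_add, LinearMap.add_apply, map_add, Polynomial.map_add, map_add,
          LinearMap.add_apply, hp, hr]
    | monomial n a =>
        rw [Polynomial.map_monomial, Polynomial.aeval_monomial, Polynomial.aeval_monomial]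
        simp only [Module.End.mul_apply, Module.algebraMap_end_apply]
        rw [Sm_smul, Sm_pow q st hst_add hst_smul L hL]
  rw [main, hP]

lemma pkC_conj (k : ℕ) : (pkC q k).map (starRingEnd ℂ) = pkC q k := by
  unfold pkC
  rw [Polynomial.map_sum]
  refine Finset.sum_congr rfl fun j hj => ?_
  rw [Polynomial.map_mul, Polynomial.map_C, Polynomial.map_prod]
  congr 1
  · congr 1
    rw [map_mul, map_div₀, map_pow, map_prod, map_prod, map_pow]
    simp only [map_sub, map_one, map_pow, conj_q_zpow, Complex.conj_ofReal]
  · refine Finset.prod_congr rfl fun i hi => ?_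
    rw [Polynomial.map_sub, Polynomial.map_mul, Polynomial.map_C, Polynomial.map_C,
      Polynomial.map_X]
    simp only [map_sub, map_add, map_one, map_mul, map_pow, Complex.conj_ofReal]

lemma st_mul' (hst_mul : ∀ x y : PolC q, st (x * y) = st y * st x)
    (x : PolC q ⊗[ℂ] PolC q) :
    st (LinearMap.mul' ℂ (PolC q) x) =
      LinearMap.mul' ℂ (PolC q) (Sm q st hst_add hst_smul x) := by
  induction x using TensorProduct.induction_on with
  | zero => simp [st_zero q st hst_smul]
  | tmul f g => rw [LinearMap.mul'_apply, Sm_tmul, LinearMap.mul'_apply, hst_mul]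
  | add x y hx hy => rw [map_add, hst_add _ _, hx, hy, map_add, map_add]

include hst_add hst_smul in
lemma starCoeff_star (hq0 : 0 < q)
    (hφz : φ (Pz q) = ((q : ℂ) ^ (-2 : ℤ)) • Pz q)
    (hφw : φ (Pw q) = ((q : ℂ) ^ (2 : ℤ)) • Pw q)
    (hσz : σ (Pz q) = ((q : ℂ) ^ (2 : ℤ)) • Pz q)
    (hσw : σ (Pw q) = ((q : ℂ) ^ (-2 : ℤ)) • Pw q)
    (hdz : d (Pz q) = (1, 0)) (hdw : d (Pw q) = (0, 1))
    (hLeib : ∀ f g : PolC q,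
      d (f * g) = ((d f).1 * g + φ f * (d g).1, (d f).2 * g + φ f * (d g).2))
    (hst_mul : ∀ x y : PolC q, st (x * y) = st y * st x)
    (hst_inv : ∀ x : PolC q, st (st x) = x)
    (hst_z : st (Pz q) = Pw q) (hst_w : st (Pw q) = Pz q)
    (f g : PolC q) (l : ℕ) :
    st (starCoeff q σ d f g l) = starCoeff q σ d (st g) (st f) l := by
  have hbox := Sm_box q φ σ d st hst_add hst_smul hq0 hφz hφw hσz hσw hdz hdw hLeib
    hst_mul hst_inv hst_z hst_w
  unfold starCoeff
  by_cases hl : l = 0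
  · subst hl
    rw [if_pos rfl, if_pos rfl]
    exact hst_mul f g
  · rw [if_neg hl, if_neg hl]
    rw [st_mul' q st hst_add hst_smul hst_mul]
    congr 1
    rw [Sm_aeval q st hst_add hst_smul (BoxT q σ d) hbox _
      (by rw [Polynomial.map_sub, pkC_conj, pkC_conj]), Sm_tmul]

end Aux

lemma sum_swap_tri {M : Type*} [AddCommMonoid M] (n : ℕ) (F : ℕ → ℕ → M) :
    ∑ j ∈ range (n + 1), ∑ k ∈ range (n + 1 - j), F j k
      = ∑ j ∈ range (n + 1), ∑ k ∈ range (n + 1 - j), F k j := by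
  have h : ∀ (F : ℕ → ℕ → M), ∑ j ∈ range (n + 1), ∑ k ∈ range (n + 1 - j), F j k
      = ∑ j ∈ range (n + 1), ∑ k ∈ range (n + 1), if j + k ≤ n then F j k else 0 := by
    intro F
    refine Finset.sum_congr rfl fun j hj => ?_
    rw [mem_range] at hj
    calc ∑ k ∈ range (n + 1 - j), F j k
        = ∑ k ∈ range (n + 1 - j), (if j + k ≤ n then F j k else 0) := by
          refine Finset.sum_congr rfl fun k hk => ?_
          rw [mem_range] at hk
          rw [if_pos (by omega)]
      _ = ∑ k ∈ range (n + 1), (if j + k ≤ n then F j k else 0) := by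
          refine Finset.sum_subset (Finset.range_subset_range.mpr (by omega)) ?_
          intro k hk hk'
          rw [mem_range] at hk hk'
          rw [if_neg (by omega)]
  rw [h, h]
  rw [Finset.sum_comm]
  refine Finset.sum_congr rfl fun j _ => Finset.sum_congr rfl fun k _ => ?_
  rw [Nat.add_comm]
/-- the coefficientwise involution `(Σ f_j t^j)* = Σ f_j* t^j` on
`Pol(ℂ)_q[[t]]` is an algebra involution for the star product:
`m(ψ₁,ψ₂)* = m(ψ₂*, ψ₁*)`.  Here `st` is the standard antilinear involution of
`Pol(ℂ)_q` (interchanging `z` and `z*`). -/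
theorem star_product_involution (q : ℝ) (hq0 : 0 < q) (hq1 : q < 1)
    (φ σ : PolC q →ₐ[ℂ] PolC q)
    (hφz : φ (Pz q) = ((q : ℂ) ^ (-2 : ℤ)) • Pz q)
    (hφw : φ (Pw q) = ((q : ℂ) ^ (2 : ℤ)) • Pw q)
    (hσz : σ (Pz q) = ((q : ℂ) ^ (2 : ℤ)) • Pz q)
    (hσw : σ (Pw q) = ((q : ℂ) ^ (-2 : ℤ)) • Pw q)
    (d : PolC q →ₗ[ℂ] PolC q × PolC q)
    (hdz : d (Pz q) = (1, 0))
    (hdw : d (Pw q) = (0, 1))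
    (hLeib : ∀ f g : PolC q,
      d (f * g) = ((d f).1 * g + φ f * (d g).1, (d f).2 * g + φ f * (d g).2))
    (st : PolC q → PolC q)
    (hst_add : ∀ x y : PolC q, st (x + y) = st x + st y)
    (hst_smul : ∀ (c : ℂ) (x : PolC q), st (c • x) = (starRingEnd ℂ) c • st x)
    (hst_mul : ∀ x y : PolC q, st (x * y) = st y * st x)
    (hst_inv : ∀ x : PolC q, st (st x) = x)
    (hst_z : st (Pz q) = Pw q)
    (hst_w : st (Pw q) = Pz q) :
    ∀ ψ₁ ψ₂ : ℕ → PolC q,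
      (fun n => st (mSer q σ d ψ₁ ψ₂ n)) =
        mSer q σ d (fun n => st (ψ₂ n)) (fun n => st (ψ₁ n)) := by
  intro ψ₁ ψ₂
  funext n
  have hstS : ∀ (s : Finset ℕ) (f : ℕ → PolC q),
      st (∑ i ∈ s, f i) = ∑ i ∈ s, st (f i) := fun s f =>
    map_sum (AddMonoidHom.mk' st hst_add) f s
  show st (mSer q σ d ψ₁ ψ₂ n) = _
  unfold mSer
  rw [hstS]
  calc ∑ j ∈ range (n + 1), st (∑ k ∈ range (n + 1 - j), starCoeff q σ d (ψ₁ j) (ψ₂ k) (n - j - k))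
      = ∑ j ∈ range (n + 1), ∑ k ∈ range (n + 1 - j),
          starCoeff q σ d (st (ψ₂ k)) (st (ψ₁ j)) (n - k - j) := by
        refine Finset.sum_congr rfl fun j _ => ?_
        rw [hstS]
        refine Finset.sum_congr rfl fun k _ => ?_
        rw [starCoeff_star q φ σ d st hst_add hst_smul hq0 hφz hφw hσz hσw hdz hdw hLeib
          hst_mul hst_inv hst_z hst_w]
        congr 1
        omega
    _ = ∑ j ∈ range (n + 1), ∑ k ∈ range (n + 1 - j),
          starCoeff q σ d (st (ψ₂ j)) (st (ψ₁ k)) (n - j - k) :=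
        (sum_swap_tri n (fun j k => starCoeff q σ d (st (ψ₂ j)) (st (ψ₁ k)) (n - j - k))).symm
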